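/- For every n ≥ 1, every σ > 0 and every θ₀ ∈ ℝ, the expectation over ε ~ N(0,1) of the tail numerator integral satisfies E[ ∫_{|v| > √n σ} v² exp(−v²/2 + εv)·(√n σ)^{−1} φ((θ₀ + v/√n)/σ) dv ] ≤ 2 n σ² ( θ₀²/σ² + ∫_ℝ u² φ(u) du ). -/

import Mathlib

open MeasureTheory ProbabilityTheory


lemma aux_lint_mgf (v : ℝ) :
    ∫⁻ ε, ENNReal.ofReal (Real.exp (ε * v)) ∂(gaussianReal 0 1)
      = ENNReal.ofReal (Real.exp (v ^ 2 / 2)) := by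
  rw [gaussianReal_of_var_ne_zero 0 one_ne_zero,
    lintegral_withDensity_eq_lintegral_mul _ (measurable_gaussianPDF 0 1)
      (by measurability)]
  have hpt : ∀ ε : ℝ, (gaussianPDF 0 1 * fun ε => ENNReal.ofReal (Real.exp (ε * v))) ε
      = ENNReal.ofReal (Real.exp (v ^ 2 / 2)) * gaussianPDF v 1 ε := by
    intro ε
    simp only [Pi.mul_apply, gaussianPDF, gaussianPDFReal]
    rw [← ENNReal.ofReal_mul (by positivity), ← ENNReal.ofReal_mul (by positivity)]
    congr 1
    push_cast
    rw [mul_assoc, ← Real.exp_add]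
    have harg : -(ε - 0) ^ 2 / (2 * 1) + ε * v = -(ε - v) ^ 2 / (2 * 1) + v ^ 2 / 2 := by ring
    rw [harg, Real.exp_add]
    ring
  simp_rw [hpt]
  rw [lintegral_const_mul _ (measurable_gaussianPDF v 1), lintegral_gaussianPDF_eq_one v one_ne_zero,
    mul_one]

lemma aux_main (c : ℝ → ℝ) (hc_meas : Measurable c) (hc_nonneg : ∀ v, 0 ≤ c v)
    (hH_int : Integrable (fun v : ℝ => v ^ 2 * c v)) (S : Set ℝ) {B : ℝ} (hB0 : 0 ≤ B)
    (hB : (∫ v : ℝ, v ^ 2 * c v) ≤ B) :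
    (∫ ε, (∫ v in S, v ^ 2 * Real.exp (-v ^ 2 / 2 + ε * v) * c v) ∂(gaussianReal 0 1)) ≤ B := by
  set μ := gaussianReal 0 1 with hμ
  set g : ℝ → ℝ → ℝ := fun ε v => v ^ 2 * Real.exp (-v ^ 2 / 2 + ε * v) * c v with hg
  have hg_nonneg : ∀ ε v, 0 ≤ g ε v := fun ε v => by
    have := hc_nonneg v
    simp only [hg]
    positivity
  have hεmeas : ∀ v : ℝ, Measurable fun ε : ℝ => ENNReal.ofReal (Real.exp (ε * v)) :=
    fun v => ((measurable_id.mul_const v).exp).ennreal_ofReal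
  have hpoint : ∀ v : ℝ, (∫⁻ ε, ENNReal.ofReal (g ε v) ∂μ) = ENNReal.ofReal (v ^ 2 * c v) := by
    intro v
    have h1 : ∀ ε : ℝ, ENNReal.ofReal (g ε v)
        = ENNReal.ofReal (Real.exp (ε * v))
          * ENNReal.ofReal (v ^ 2 * Real.exp (-v ^ 2 / 2) * c v) := by
      intro ε
      rw [← ENNReal.ofReal_mul (Real.exp_nonneg _)]
      congr 1
      simp only [hg]
      rw [Real.exp_add]
      ring
    simp_rw [h1]
    rw [lintegral_mul_const _ (hεmeas v), aux_lint_mgf v,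
      ← ENNReal.ofReal_mul (Real.exp_nonneg _)]
    congr 1
    have h2 : Real.exp (v ^ 2 / 2) * Real.exp (-v ^ 2 / 2) = 1 := by
      rw [← Real.exp_add, show v ^ 2 / 2 + -v ^ 2 / 2 = 0 by ring, Real.exp_zero]
    calc Real.exp (v ^ 2 / 2) * (v ^ 2 * Real.exp (-v ^ 2 / 2) * c v)
        = (Real.exp (v ^ 2 / 2) * Real.exp (-v ^ 2 / 2)) * (v ^ 2 * c v) := by ring
      _ = v ^ 2 * c v := by rw [h2, one_mul]
  have hg_meas : Measurable (Function.uncurry g) := by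
    apply Measurable.mul
    apply Measurable.mul
    · exact measurable_snd.pow measurable_const
    · exact (((measurable_snd.pow measurable_const).neg.div_const 2).add
        (measurable_fst.mul measurable_snd)).exp
    · exact hc_meas.comp measurable_snd
  have key : (∫⁻ ε, (∫⁻ v in S, ENNReal.ofReal (g ε v)) ∂μ) ≤ ENNReal.ofReal B := by
    calc (∫⁻ ε, (∫⁻ v in S, ENNReal.ofReal (g ε v)) ∂μ)
        = ∫⁻ v in S, ∫⁻ ε, ENNReal.ofReal (g ε v) ∂μ :=
          lintegral_lintegral_swap hg_meas.ennreal_ofReal.aemeasurable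
      _ = ∫⁻ v in S, ENNReal.ofReal (v ^ 2 * c v) := lintegral_congr fun v => hpoint v
      _ ≤ ∫⁻ v, ENNReal.ofReal (v ^ 2 * c v) := lintegral_mono' Measure.restrict_le_self le_rfl
      _ = ENNReal.ofReal (∫ v, v ^ 2 * c v) :=
          (ofReal_integral_eq_lintegral_ofReal hH_int
            (ae_of_all _ fun v => mul_nonneg (sq_nonneg v) (hc_nonneg v))).symm
      _ ≤ ENNReal.ofReal B := ENNReal.ofReal_le_ofReal hB
  have hF_nonneg : ∀ ε, 0 ≤ ∫ v in S, g ε v := fun ε => integral_nonneg fun v => hg_nonneg ε v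
  have hF_le : ∀ ε : ℝ, ENNReal.ofReal (∫ v in S, g ε v) ≤ ∫⁻ v in S, ENNReal.ofReal (g ε v) := by
    intro ε
    by_cases hInt : Integrable (fun v => g ε v) (volume.restrict S)
    · exact (ofReal_integral_eq_lintegral_ofReal hInt (ae_of_all _ (hg_nonneg ε))).le
    · rw [integral_undef hInt]
      simp
  show (∫ ε, (∫ v in S, g ε v) ∂μ) ≤ B
  by_cases hFi : Integrable (fun ε => ∫ v in S, g ε v) μ
  · have h1 : ENNReal.ofReal (∫ ε, (∫ v in S, g ε v) ∂μ) ≤ ENNReal.ofReal B := by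
      rw [ofReal_integral_eq_lintegral_ofReal hFi (ae_of_all _ hF_nonneg)]
      exact le_trans (lintegral_mono fun ε => hF_le ε) key
    exact (ENNReal.ofReal_le_ofReal_iff hB0).mp h1
  · rw [integral_undef hFi]
    exact hB0

theorem tail_numerator_bound (φ : ℝ → ℝ) (cφ Cφ τ : ℝ)
    (hφ_meas : Measurable φ) (hφ_nonneg : ∀ x, 0 ≤ φ x)
    (hφ_prob : (∫ x : ℝ, φ x) = 1)
    (hc : 0 < cφ) (hcC : cφ ≤ Cφ) (hτ : 0 < τ)
    (hub : ∀ x : ℝ, φ x ≤ Cφ)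
    (hlb : ∀ x ∈ Set.Ioo (-τ) τ, cφ ≤ φ x)
    (hmom : Integrable (fun x : ℝ => x ^ 2 * φ x)) :
    ∀ n : ℕ, 1 ≤ n → ∀ σ : ℝ, 0 < σ → ∀ θ₀ : ℝ,
      (∫ ε, (∫ v in {v : ℝ | Real.sqrt n * σ < |v|},
          v ^ 2 * Real.exp (-v ^ 2 / 2 + ε * v) *
            ((Real.sqrt n * σ)⁻¹ * φ ((θ₀ + v / Real.sqrt n) / σ)))
        ∂(gaussianReal 0 1)) ≤
        2 * n * σ ^ 2 * (θ₀ ^ 2 / σ ^ 2 + ∫ u : ℝ, u ^ 2 * φ u) := by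
  intro n hn σ hσ θ₀
  have hn0 : (0 : ℝ) < (n : ℝ) := by exact_mod_cast Nat.lt_of_lt_of_le Nat.zero_lt_one hn
  have hsn : 0 < Real.sqrt (n : ℝ) := Real.sqrt_pos.2 hn0
  have hs : 0 < Real.sqrt (n : ℝ) * σ := mul_pos hsn hσ
  set M : ℝ := ∫ u : ℝ, u ^ 2 * φ u with hM
  have hM0 : 0 ≤ M := integral_nonneg fun u => mul_nonneg (sq_nonneg u) (hφ_nonneg u)
  have hB0 : 0 ≤ 2 * (n : ℝ) * σ ^ 2 * (θ₀ ^ 2 / σ ^ 2 + M) :=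
    mul_nonneg (by positivity) (add_nonneg (by positivity) hM0)
  have hφ_int : Integrable φ := by
    by_contra h
    rw [integral_undef h] at hφ_prob
    norm_num at hφ_prob
  set c : ℝ → ℝ := fun v => (Real.sqrt (n : ℝ) * σ)⁻¹ * φ ((θ₀ + v / Real.sqrt (n : ℝ)) / σ)
    with hc_def
  have hc_meas : Measurable c :=
    (hφ_meas.comp (((measurable_id.div_const _).const_add θ₀).div_const σ)).const_mul _
  have hc_nonneg : ∀ v, 0 ≤ c v := fun v =>
    mul_nonneg (inv_nonneg.2 hs.le) (hφ_nonneg _)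
  set Gf : ℝ → ℝ := fun u =>
    (Real.sqrt (n : ℝ) * σ * u - Real.sqrt (n : ℝ) * θ₀) ^ 2 * φ u with hGf_def
  have hGf_meas : Measurable Gf :=
    (((measurable_id.const_mul _).sub_const _).pow_const 2).mul hφ_meas
  have hGf_nonneg : ∀ u, 0 ≤ Gf u := fun u => mul_nonneg (sq_nonneg _) (hφ_nonneg u)
  set D : ℝ → ℝ := fun u => 2 * (Real.sqrt (n : ℝ) * σ) ^ 2 * (u ^ 2 * φ u)
    + 2 * (Real.sqrt (n : ℝ) * θ₀) ^ 2 * φ u with hD_def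
  have hD_int : Integrable D := (hmom.const_mul _).add (hφ_int.const_mul _)
  have hGD : ∀ u, Gf u ≤ D u := by
    intro u
    have h := mul_nonneg
      (sq_nonneg (Real.sqrt (n : ℝ) * σ * u + Real.sqrt (n : ℝ) * θ₀)) (hφ_nonneg u)
    simp only [hGf_def, hD_def]
    nlinarith [h]
  have hGf_int : Integrable Gf :=
    hD_int.mono' hGf_meas.aestronglyMeasurable
      (ae_of_all _ fun u => by
        rw [Real.norm_eq_abs, abs_of_nonneg (hGf_nonneg u)]; exact hGD u)
  -- change of variables identity
  have harg : ∀ v : ℝ, (θ₀ + v / Real.sqrt (n : ℝ)) / σ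
      = (Real.sqrt (n : ℝ) * σ)⁻¹ * (v + Real.sqrt (n : ℝ) * θ₀) := by
    intro v
    field_simp
    ring
  have hHG : ∀ v : ℝ, v ^ 2 * c v
      = (Real.sqrt (n : ℝ) * σ)⁻¹
        * Gf ((Real.sqrt (n : ℝ) * σ)⁻¹ * (v + Real.sqrt (n : ℝ) * θ₀)) := by
    intro v
    have hx : Real.sqrt (n : ℝ) * σ
        * ((Real.sqrt (n : ℝ) * σ)⁻¹ * (v + Real.sqrt (n : ℝ) * θ₀))
        - Real.sqrt (n : ℝ) * θ₀ = v := by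
      field_simp
      ring
    simp only [hc_def, hGf_def, harg v, hx]
    ring
  have h1 : Integrable (fun x : ℝ => Gf ((Real.sqrt (n : ℝ) * σ)⁻¹ * x)) :=
    hGf_int.comp_mul_left' (inv_ne_zero hs.ne')
  have h2 : Integrable
      (fun v : ℝ => Gf ((Real.sqrt (n : ℝ) * σ)⁻¹ * (v + Real.sqrt (n : ℝ) * θ₀))) :=
    h1.comp_add_right _
  have hH_int : Integrable (fun v : ℝ => v ^ 2 * c v) :=
    (h2.const_mul ((Real.sqrt (n : ℝ) * σ)⁻¹)).congr (ae_of_all _ fun v => (hHG v).symm)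
  have hint : (∫ v : ℝ, v ^ 2 * c v) = ∫ u : ℝ, Gf u := by
    calc (∫ v : ℝ, v ^ 2 * c v)
        = ∫ v : ℝ, (Real.sqrt (n : ℝ) * σ)⁻¹
            * Gf ((Real.sqrt (n : ℝ) * σ)⁻¹ * (v + Real.sqrt (n : ℝ) * θ₀)) := by
          simp_rw [hHG]
      _ = (Real.sqrt (n : ℝ) * σ)⁻¹
            * ∫ v : ℝ, Gf ((Real.sqrt (n : ℝ) * σ)⁻¹ * (v + Real.sqrt (n : ℝ) * θ₀)) :=
          integral_const_mul _ _
      _ = (Real.sqrt (n : ℝ) * σ)⁻¹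
            * ∫ x : ℝ, Gf ((Real.sqrt (n : ℝ) * σ)⁻¹ * x) := by
          congr 1
          exact integral_add_right_eq_self
            (fun x => Gf ((Real.sqrt (n : ℝ) * σ)⁻¹ * x)) (Real.sqrt (n : ℝ) * θ₀)
      _ = (Real.sqrt (n : ℝ) * σ)⁻¹
            * (|((Real.sqrt (n : ℝ) * σ)⁻¹)⁻¹| • ∫ u : ℝ, Gf u) := by
          rw [MeasureTheory.Measure.integral_comp_mul_left Gf ((Real.sqrt (n : ℝ) * σ)⁻¹)]
      _ = ∫ u : ℝ, Gf u := by
          rw [inv_inv, abs_of_pos hs, smul_eq_mul, ← mul_assoc, inv_mul_cancel₀ hs.ne', one_mul]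
  have hD_val : (∫ u : ℝ, D u)
      = 2 * (Real.sqrt (n : ℝ) * σ) ^ 2 * M + 2 * (Real.sqrt (n : ℝ) * θ₀) ^ 2 := by
    simp only [hD_def]
    rw [integral_add (hmom.const_mul _) (hφ_int.const_mul _), integral_const_mul,
      integral_const_mul, hφ_prob, mul_one, hM]
  have hsq : Real.sqrt (n : ℝ) ^ 2 = (n : ℝ) := Real.sq_sqrt hn0.le
  have hBcalc : 2 * (Real.sqrt (n : ℝ) * σ) ^ 2 * M + 2 * (Real.sqrt (n : ℝ) * θ₀) ^ 2
      = 2 * (n : ℝ) * σ ^ 2 * (θ₀ ^ 2 / σ ^ 2 + M) := by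
    rw [mul_pow, mul_pow, hsq]
    field_simp
    ring
  have hB : (∫ v : ℝ, v ^ 2 * c v) ≤ 2 * (n : ℝ) * σ ^ 2 * (θ₀ ^ 2 / σ ^ 2 + M) := by
    rw [hint, ← hBcalc, ← hD_val]
    exact integral_mono_of_nonneg (ae_of_all _ hGf_nonneg) hD_int (ae_of_all _ hGD)
  exact aux_main c hc_meas hc_nonneg hH_int _ hB0 hB
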